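/- A series morphism l : Γ → K^{≻1} induced from l : Φ → K^{≻1}\{0} satisfies the Growth Axiom (GA) (for all α ∈ Γ with α ≻ 1, l(α) ≺ α) if and only if LF(l(φ)) ≺ φ for every φ ∈ Φ. -/

import Mathlib

noncomputable section
open Classical

/-! Core: generalized series fields ℝ((Γ)) realized as Hahn series over Γᵒᵈ,
so supports are anti-well-ordered in Γ and the leading monomial is the max of the support. -/

/-- The generalized series field `ℝ((Γ))`. -/
abbrev GSF (Γ : Type*) [AddCommGroup Γ] [LinearOrder Γ] [IsOrderedAddMonoid Γ] : Type _ := HahnSeries Γᵒᵈ ℝ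

variable {Γ : Type*} [AddCommGroup Γ] [LinearOrder Γ] [IsOrderedAddMonoid Γ]

/-- The leading monomial of a series (max of the support; junk value `0` at `0`). -/
def LM (a : GSF Γ) : Γ := OrderDual.ofDual a.order

/-- The leading coefficient. -/
def LC (a : GSF Γ) : ℝ := a.leadingCoeff

/-- The monomial with exponent `γ` (written multiplicatively in the paper). -/
def mon (γ : Γ) : GSF Γ := HahnSeries.single (OrderDual.toDual γ) 1

/-- The leading term `LT(a)`. -/
def LTm (a : GSF Γ) : GSF Γ := LC a • mon (LM a)

/-- The leading monomial, with value `⊥` at `0`. -/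
def LMb (a : GSF Γ) : WithBot Γ := if a = 0 then ⊥ else ↑(LM a)

/-- Positivity in the anti-lexicographic ordering: positive leading coefficient. -/
def Kpos (a : GSF Γ) : Prop := 0 < LC a

/-- The anti-lexicographic (strict) ordering on `ℝ((Γ))`. -/
def Klt (a b : GSF Γ) : Prop := Kpos (b - a)

/-- Dominance relation `a ≼ b`. -/
def Kdom (a b : GSF Γ) : Prop := LMb a ≤ LMb b

/-- Strict dominance `a ≺ b`. -/
def KdomLt (a b : GSF Γ) : Prop := LMb a < LMb b

/-- Asymptotic equivalence `a ≍ b` (equal leading monomials). -/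
def Kasymp (a b : GSF Γ) : Prop := LMb a = LMb b

/-- `a ∼ b` : equal leading terms. -/
def Ksim (a b : GSF Γ) : Prop := a ≠ 0 ∧ b ≠ 0 ∧ LTm a = LTm b

/-- The maximal ideal `K^{≺1}` of the valuation ring: all monomials `≺ 1`. -/
def Kprec1 : Set (GSF Γ) := {x | ∀ τ ∈ x.support, OrderDual.ofDual τ < (0 : Γ)}

/-- The subring `K^{≻1}` of purely infinite series. -/
def Ksucc1 : Set (GSF Γ) := {x | ∀ τ ∈ x.support, (0 : Γ) < OrderDual.ofDual τ}

/-- The logarithm of `1`-units: `l₁(1+ε) = Σ_{n≥1} (-1)^{n-1} εⁿ/n` (junk `0` off `1 + K^{≺1}`). -/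
def l1 (x : GSF Γ) : GSF Γ :=
  if h : 0 < (x - 1).orderTop then
    (HahnSeries.SummableFamily.mk
      (fun n : ℕ => ((-1 : ℝ) ^ n / (n + 1)) • (x - 1) ^ (n + 1))
      (by
        refine Set.IsPWO.mono (HahnSeries.SummableFamily.isPWO_iUnion_support_powers
          (HahnSeries.zero_le_orderTop_iff.mp (le_of_lt h))) ?_
        intro g hg
        simp only [Set.mem_iUnion] at hg ⊢
        obtain ⟨n, hn⟩ := hg
        exact ⟨n + 1, Function.support_const_smul_subset _ _ hn⟩)
      (by
        intro g
        refine ((HahnSeries.SummableFamily.pow_finite_co_support h g).preimage_embedding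
          ⟨Nat.succ, Nat.succ_injective⟩).subset fun n hn => ?_
        simp only [Set.mem_preimage, Function.mem_support, Function.Embedding.coeFn_mk,
          HahnSeries.SummableFamily.powers_toFun] at hn ⊢
        exact fun hc => hn (by rw [HahnSeries.coeff_smul, hc, smul_zero]))).hsum
  else 0

/-! Second core layer: Γ as a subgroup of the Hahn group H(Φ), series derivations,
Hardy type derivations, series morphisms and pre-logarithms. -/

/-- A realization of the ordered abelian group `Γ` as a subgroup of the Hahn group
`H(Φ)` over the chain `Φ` of fundamental monomials (written additively): each `γ ∈ Γ`
is a formal product `∏ φ^{γ_φ}` with real exponents `expo γ φ` and anti-well-ordered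
support; `fm φ` is the fundamental monomial `φ` itself viewed in `Γ`; `LF` is the
leading fundamental monomial (max of the support, junk at `0`); the ordering of `Γ`
is the anti-lexicographic one. -/
structure HahnEmb (Φ Γ : Type*) [LinearOrder Φ] [AddCommGroup Γ] [LinearOrder Γ] [IsOrderedAddMonoid Γ] where
  expo : Γ → Φ → ℝ
  expo_add : ∀ α β φ, expo (α + β) φ = expo α φ + expo β φ
  expo_inj : ∀ α β, (∀ φ, expo α φ = expo β φ) → α = β
  supp_awo : ∀ α : Γ, (Function.support (expo α)).WellFoundedOn ((· > ·) : Φ → Φ → Prop)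
  fm : Φ → Γ
  expo_fm : ∀ φ ψ, expo (fm φ) ψ = if ψ = φ then 1 else 0
  LF : Γ → Φ
  LF_mem : ∀ α, α ≠ 0 → expo α (LF α) ≠ 0
  LF_max : ∀ α φ, expo α φ ≠ 0 → φ ≤ LF α
  pos_iff : ∀ α : Γ, 0 < α ↔ (α ≠ 0 ∧ 0 < expo α (LF α))

variable {Φ : Type*} [LinearOrder Φ]

/-- The support `supp γ ⊆ Φ` of a generalized monomial. -/
def HahnEmb.supp (E : HahnEmb Φ Γ) (γ : Γ) : Set Φ := Function.support (E.expo γ)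

/-- The leading exponent `LE(γ)`. -/
def HahnEmb.LE (E : HahnEmb Φ Γ) (γ : Γ) : ℝ := E.expo γ (E.LF γ)

/-- The logarithmic derivative `φ'/φ` of a fundamental monomial. -/
def logD (E : HahnEmb Φ Γ) (d : GSF Γ → GSF Γ) (φ : Φ) : GSF Γ :=
  d (mon (E.fm φ)) / mon (E.fm φ)

/-- `θ^{(φ)} = LM(φ'/φ)`. -/
def theta (E : HahnEmb Φ Γ) (d : GSF Γ → GSF Γ) (φ : Φ) : Γ := LM (logD E d φ)

/-- A series derivation: `1' = 0`, the strong Leibniz rule (D1) and strong linearity (D2),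
expressed coefficientwise (finitely many contributions to each coefficient, whose sum is
the coefficient of the derivative). -/
structure IsSeriesDerivation (E : HahnEmb Φ Γ) (d : GSF Γ → GSF Γ) : Prop where
  deriv_one : d 1 = 0
  leibniz_fin : ∀ (γ : Γ) (τ : Γᵒᵈ),
      {φ : Φ | E.expo γ φ * (logD E d φ).coeff τ ≠ 0}.Finite
  leibniz : ∀ (γ : Γ) (τ : Γᵒᵈ),
      (d (mon γ)).coeff (OrderDual.toDual (γ + OrderDual.ofDual τ))
        = ∑ᶠ φ : Φ, E.expo γ φ * (logD E d φ).coeff τ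
  linear_fin : ∀ (a : GSF Γ) (τ : Γᵒᵈ),
      {γ : Γᵒᵈ | a.coeff γ * (d (HahnSeries.single γ 1)).coeff τ ≠ 0}.Finite
  linear : ∀ (a : GSF Γ) (τ : Γᵒᵈ),
      (d a).coeff τ = ∑ᶠ γ : Γᵒᵈ, a.coeff γ * (d (HahnSeries.single γ 1)).coeff τ

/-- A Hardy type derivation: (HD1) the constants are `ℝ`, (HD2) l'Hospital's rule,
(HD3) compatibility of the logarithmic derivative with the dominance relation,
with `≍` exactly for comparable elements. -/
structure IsHardy (E : HahnEmb Φ Γ) (d : GSF Γ → GSF Γ) : Prop where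
  constants : ∀ a : GSF Γ, d a = 0 ↔ ∃ r : ℝ, a = (r : ℝ) • (1 : GSF Γ)
  hospital : ∀ a b : GSF Γ, a ≠ 0 → b ≠ 0 → ¬ Kasymp a 1 → ¬ Kasymp b 1 →
      (Kdom a b ↔ Kdom (d a) (d b))
  logcomp : ∀ a b : GSF Γ, a ≠ 0 → b ≠ 0 → |LM b| < |LM a| → 0 < |LM b| →
      Kdom (d b / b) (d a / a) ∧
      (Kasymp (d a / a) (d b / b) ↔ E.LF (LM a) = E.LF (LM b))

/-- A series morphism `l : Γ → K`, i.e. axiom (L): `l(∏ φ^{α_φ}) = Σ α_φ l(φ)`,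
expressed coefficientwise via the summability of the families involved. -/
structure IsSeriesMorphism (E : HahnEmb Φ Γ) (l : Γ → GSF Γ) : Prop where
  fin : ∀ (α : Γ) (τ : Γᵒᵈ), {φ : Φ | E.expo α φ * (l (E.fm φ)).coeff τ ≠ 0}.Finite
  eq : ∀ (α : Γ) (τ : Γᵒᵈ), (l α).coeff τ = ∑ᶠ φ : Φ, E.expo α φ * (l (E.fm φ)).coeff τ

/-- The pre-logarithm on `K_{>0}` induced by a pre-logarithmic section `l` on `Γ`:
`l(a) = log(LC a) + l(LM a) + l₁(1 + ε_a)` where `a = LT(a)(1+ε_a)`. -/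
def prelogOf (l : Γ → GSF Γ) (a : GSF Γ) : GSF Γ :=
  Real.log (LC a) • (1 : GSF Γ) + l (LM a) + l1 (a / LTm a)

/-- `l` is a pre-logarithmic section: a series morphism into `K^{≻1}` which is an
embedding of ordered groups. -/
structure IsPrelogSection (E : HahnEmb Φ Γ) (l : Γ → GSF Γ) : Prop where
  morphism : IsSeriesMorphism E l
  purely_infinite : ∀ α : Γ, l α ∈ Ksucc1
  order_preserving : ∀ α β : Γ, α < β → Klt (l α) (l β)

/-- Compatibility of the induced pre-logarithm with the derivation:
`l(a)' = a'/a` for all `a > 0`. -/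
def LogCompatible (d : GSF Γ → GSF Γ) (l : Γ → GSF Γ) : Prop :=
  ∀ a : GSF Γ, Kpos a → d (prelogOf l a) = d a / a

/-- The Growth Axiom (GA): `l(α) ≺ α` for all monomials `α ≻ 1`. -/
def GrowthAxiom (l : Γ → GSF Γ) : Prop :=
  ∀ α : Γ, 0 < α → KdomLt (l α) (mon α)


section Aux

variable {Φ Γ : Type*} [LinearOrder Φ] [AddCommGroup Γ] [LinearOrder Γ] [IsOrderedAddMonoid Γ]

lemma expo_zero' (E : HahnEmb Φ Γ) (φ : Φ) : E.expo 0 φ = 0 := by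
  have h := E.expo_add 0 0 φ
  simp only [add_zero] at h
  linarith

lemma expo_neg' (E : HahnEmb Φ Γ) (γ : Γ) (φ : Φ) : E.expo (-γ) φ = - E.expo γ φ := by
  have h := E.expo_add γ (-γ) φ
  rw [add_neg_cancel, expo_zero'] at h
  linarith

lemma expo_sub' (E : HahnEmb Φ Γ) (γ δ : Γ) (φ : Φ) :
    E.expo (γ - δ) φ = E.expo γ φ - E.expo δ φ := by
  rw [sub_eq_add_neg, E.expo_add, expo_neg', sub_eq_add_neg]

lemma ne_zero_of_expo_ne (E : HahnEmb Φ Γ) {γ : Γ} {φ : Φ} (h : E.expo γ φ ≠ 0) : γ ≠ 0 := by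
  intro hγ; rw [hγ, expo_zero'] at h; exact h rfl

lemma lf_eq' (E : HahnEmb Φ Γ) {γ : Γ} {φ : Φ} (h0 : E.expo γ φ ≠ 0)
    (hup : ∀ χ, φ < χ → E.expo γ χ = 0) : E.LF γ = φ := by
  have hγ : γ ≠ 0 := ne_zero_of_expo_ne E h0
  have h1 := E.LF_mem γ hγ
  have h2 := E.LF_max γ φ h0
  rcases lt_or_eq_of_le h2 with h | h
  · exact absurd (hup _ h) h1
  · exact h.symm

lemma pos_of_expo (E : HahnEmb Φ Γ) {γ : Γ} {φ : Φ} (h0 : 0 < E.expo γ φ)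
    (hup : ∀ χ, φ < χ → E.expo γ χ = 0) : 0 < γ := by
  have hLF := lf_eq' E h0.ne' hup
  exact (E.pos_iff γ).2 ⟨ne_zero_of_expo_ne E h0.ne', by rw [hLF]; exact h0⟩

lemma expo_zero_of_lf_lt (E : HahnEmb Φ Γ) {γ : Γ} {φ : Φ} (h : E.LF γ < φ) :
    E.expo γ φ = 0 := by
  by_contra hc
  exact absurd (E.LF_max γ φ hc) (not_le.2 h)

lemma fm_pos (E : HahnEmb Φ Γ) (φ : Φ) : 0 < E.fm φ := by
  refine pos_of_expo E (φ := φ) ?_ ?_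
  · rw [E.expo_fm, if_pos rfl]; norm_num
  · intro χ hχ; rw [E.expo_fm, if_neg (ne_of_gt hχ)]

lemma mon_ne_zero (γ : Γ) : mon γ ≠ 0 := HahnSeries.single_ne_zero one_ne_zero

lemma LMb_mon (γ : Γ) : LMb (mon γ) = (γ : WithBot Γ) := by
  rw [LMb, if_neg (mon_ne_zero γ), LM, mon, HahnSeries.order_single one_ne_zero]
  rfl

lemma kdomLt_mon_iff {a : GSF Γ} {γ : Γ} : KdomLt a (mon γ) ↔ (a = 0 ∨ LM a < γ) := by
  rw [KdomLt, LMb_mon, LMb]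
  split_ifs with h
  · simp [h]
  · simp [h, WithBot.coe_lt_coe]

lemma le_LM_of_coeff_ne {a : GSF Γ} {γ : Γ} (h : a.coeff (OrderDual.toDual γ) ≠ 0) :
    γ ≤ LM a := by
  have h' : a.order ≤ OrderDual.toDual γ := HahnSeries.order_le_of_coeff_ne_zero h
  exact h'

lemma coeff_zero_of_LM_lt {a : GSF Γ} {γ : Γ} (h : LM a < γ) :
    a.coeff (OrderDual.toDual γ) = 0 := by
  by_contra hc
  exact absurd (le_LM_of_coeff_ne hc) (not_le.2 h)

lemma coeff_LM_ne {a : GSF Γ} (ha : a ≠ 0) : a.coeff (OrderDual.toDual (LM a)) ≠ 0 := by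
  have := mt HahnSeries.coeff_order_eq_zero.mp ha
  exact this

lemma lm_pos_of_succ1 {a : GSF Γ} (ha : a ∈ Ksucc1) (h0 : a ≠ 0) : 0 < LM a :=
  ha a.order (by simpa [HahnSeries.mem_support] using mt HahnSeries.coeff_order_eq_zero.mp h0)

lemma l_zero' (E : HahnEmb Φ Γ) (l : Γ → GSF Γ) (hm : IsSeriesMorphism E l) : l 0 = 0 := by
  ext τ
  rw [hm.eq 0 τ, HahnSeries.coeff_zero]
  apply finsum_eq_zero_of_forall_eq_zero
  intro ψ
  rw [expo_zero', zero_mul]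

lemma l_ne_zero' (E : HahnEmb Φ Γ) (l : Γ → GSF Γ) (hsec : IsPrelogSection E l)
    {β : Γ} (hβ : 0 < β) : l β ≠ 0 := by
  have h := hsec.order_preserving 0 β hβ
  rw [l_zero' E l hsec.morphism] at h
  intro hc
  rw [Klt, Kpos, hc, sub_zero, LC, HahnSeries.leadingCoeff_zero] at h
  exact lt_irrefl 0 h

lemma exists_of_coeff_ne (E : HahnEmb Φ Γ) (l : Γ → GSF Γ) (hm : IsSeriesMorphism E l)
    {α : Γ} {τ : Γᵒᵈ} (h : (l α).coeff τ ≠ 0) :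
    ∃ ψ, E.expo α ψ ≠ 0 ∧ (l (E.fm ψ)).coeff τ ≠ 0 := by
  by_contra hc
  push_neg at hc
  rw [hm.eq α τ] at h
  apply h
  apply finsum_eq_zero_of_forall_eq_zero
  intro ψ
  rcases eq_or_ne (E.expo α ψ) 0 with h1 | h1
  · rw [h1, zero_mul]
  · rw [hc ψ h1, mul_zero]

end Aux

/-- A pre-logarithmic section `l : Γ → K^{≻1}` which is a series morphism induced from a
map `Φ → K^{≻1}\{0}` satisfies the Growth Axiom (GA) (`l(α) ≺ α` for all `α ≻ 1`)
if and only if (HL3): `LF(l(φ)) ≺ φ` for every `φ ∈ Φ`. -/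
theorem statement5 {Φ Γ : Type*} [LinearOrder Φ] [AddCommGroup Γ] [LinearOrder Γ] [IsOrderedAddMonoid Γ]
    [Nontrivial Γ]
    (E : HahnEmb Φ Γ) (l : Γ → GSF Γ)
    (hsec : IsPrelogSection E l)
    (hne : ∀ φ : Φ, l (E.fm φ) ≠ 0) :
    GrowthAxiom l ↔ ∀ φ : Φ, E.LF (LM (l (E.fm φ))) < φ := by
  constructor
  · -- (GA) ⇒ (HL3)
    intro hGA φ
    set β : Γ := LM (l (E.fm φ)) with hβdef
    have hlφ : l (E.fm φ) ≠ 0 := hne φ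
    have hβlt : β < E.fm φ := by
      rcases kdomLt_mon_iff.1 (hGA _ (fm_pos E φ)) with h | h
      · exact absurd h hlφ
      · exact h
    have hβpos : 0 < β := lm_pos_of_succ1 (hsec.purely_infinite _) hlφ
    have hβexp : 0 < E.expo β (E.LF β) := ((E.pos_iff β).1 hβpos).2
    by_contra hcon
    push_neg at hcon
    rcases lt_or_eq_of_le hcon with hlt | heq
    · -- φ < LF β : contradicts β < fm φ
      have hval : E.expo (E.fm φ - β) (E.LF β) < 0 := by
        rw [expo_sub', E.expo_fm, if_neg (ne_of_gt hlt)]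
        linarith
      have hup : ∀ χ, E.LF β < χ → E.expo (E.fm φ - β) χ = 0 := by
        intro χ hχ
        rw [expo_sub', E.expo_fm, if_neg (ne_of_gt (lt_trans hlt hχ)),
          expo_zero_of_lf_lt E hχ, sub_zero]
      have hLF : E.LF (E.fm φ - β) = E.LF β := lf_eq' E hval.ne hup
      have hpos : 0 < E.fm φ - β := sub_pos.2 hβlt
      have := ((E.pos_iff _).1 hpos).2
      rw [hLF] at this
      linarith
    · -- φ = LF β
      have hc : 0 < E.expo β φ := by rw [heq]; exact hβexp
      -- Apply (GA) to β itself
      have hlβ : l β ≠ 0 := l_ne_zero' E l hsec hβpos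
      have hLMβ : LM (l β) < β := by
        rcases kdomLt_mon_iff.1 (hGA β hβpos) with h | h
        · exact absurd h hlβ
        · exact h
      have hcoeff0 : (l β).coeff (OrderDual.toDual β) = 0 := coeff_zero_of_LM_lt hLMβ
      -- extract a cancelling term ψ ≠ φ
      have hφterm : E.expo β φ * (l (E.fm φ)).coeff (OrderDual.toDual β) ≠ 0 := by
        apply mul_ne_zero hc.ne'
        exact coeff_LM_ne hlφ
      have hex : ∃ ψ, ψ ≠ φ ∧ E.expo β ψ * (l (E.fm ψ)).coeff (OrderDual.toDual β) ≠ 0 := by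
        by_contra hall
        push_neg at hall
        have := finsum_eq_single
          (fun ψ => E.expo β ψ * (l (E.fm ψ)).coeff (OrderDual.toDual β)) φ hall
        rw [(hsec.morphism.eq β (OrderDual.toDual β)).symm.trans hcoeff0] at this
        exact hφterm this.symm
      obtain ⟨ψ, hψφ, hψ⟩ := hex
      have hψe : E.expo β ψ ≠ 0 := fun h => hψ (by rw [h, zero_mul])
      have hψc : (l (E.fm ψ)).coeff (OrderDual.toDual β) ≠ 0 :=
        fun h => hψ (by rw [h, mul_zero])
      have hψlt : ψ < φ := lt_of_le_of_ne (heq ▸ E.LF_max β ψ hψe) hψφ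
      -- β ≤ LM (l (fm ψ)) < fm ψ < β, contradiction
      have h1 : β ≤ LM (l (E.fm ψ)) := le_LM_of_coeff_ne hψc
      have h2 : LM (l (E.fm ψ)) < E.fm ψ := by
        rcases kdomLt_mon_iff.1 (hGA _ (fm_pos E ψ)) with h | h
        · exact absurd h (hne ψ)
        · exact h
      have h3 : E.fm ψ < β := by
        rw [← sub_pos]
        refine pos_of_expo E (φ := φ) ?_ ?_
        · rw [expo_sub', E.expo_fm, if_neg (ne_of_gt hψlt), sub_zero]; exact hc
        · intro χ hχ
          rw [expo_sub', E.expo_fm, if_neg (ne_of_gt (lt_trans hψlt hχ)),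
            expo_zero_of_lf_lt E (heq ▸ hχ), sub_zero]
      exact lt_irrefl β (lt_of_le_of_lt h1 (lt_trans h2 h3))
  · -- (HL3) ⇒ (GA)
    intro hHL α hα
    rw [kdomLt_mon_iff]
    rcases eq_or_ne (l α) 0 with h0 | h0
    · exact Or.inl h0
    · refine Or.inr ?_
      obtain ⟨ψ, hψe, hψc⟩ := exists_of_coeff_ne E l hsec.morphism (coeff_LM_ne h0)
      have hle : LM (l α) ≤ LM (l (E.fm ψ)) := le_LM_of_coeff_ne hψc
      refine lt_of_le_of_lt hle ?_
      -- LM (l (fm ψ)) < α since LF (LM (l (fm ψ))) < ψ ≤ LF α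
      have hψle : ψ ≤ E.LF α := E.LF_max α ψ hψe
      have hLFlt : E.LF (LM (l (E.fm ψ))) < E.LF α := lt_of_lt_of_le (hHL ψ) hψle
      have hαexp : 0 < E.expo α (E.LF α) := ((E.pos_iff α).1 hα).2
      rw [← sub_pos]
      refine pos_of_expo E (φ := E.LF α) ?_ ?_
      · rw [expo_sub', expo_zero_of_lf_lt E hLFlt, sub_zero]; exact hαexp
      · intro χ hχ
        rw [expo_sub', expo_zero_of_lf_lt E (lt_trans hLFlt hχ),
          expo_zero_of_lf_lt E hχ, sub_zero]
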